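/- Let (A, δ_A, ε_A) and (B, δ_B, ε_B) be cocommutative comonoid objects in a braided monoidal category, i.e. δ_A ≫ β_{A,A} = δ_A and δ_B ≫ β_{B,B} = δ_B, and let δ_× : A ⊗ B ⟶ (A ⊗ B) ⊗ (A ⊗ B) be the braided-product comultiplication. Then for every morphism q : A ⊗ B ⟶ 𝟙, one has δ_× ≫ (q ⊗ id_{A⊗B}) ≫ λ_{A⊗B} = δ_× ≫ (id_{A⊗B} ⊗ q) ≫ ρ_{A⊗B}. (This is the condition q x = θ(q) x characterizing central elements; it shows that for the braided product of two commutative Q-systems, i.e. two local extensions, the entire relative commutant coincides with the centre.) -/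

import Mathlib

open CategoryTheory MonoidalCategory

variable {C : Type*} [Category C] [MonoidalCategory C] [BraidedCategory C]

/-- The braided-product comultiplication on `A ⊗ B` built from comultiplications
`δ_A` and `δ_B`: apply `δ_A ⊗ δ_B`, rebracket via the associator, and apply
`id_A ⊗ β_{A,B} ⊗ id_B` to the middle factors `A ⊗ B`. -/
noncomputable def bpComul {A B : C} (dA : A ⟶ A ⊗ A) (dB : B ⟶ B ⊗ B) :
    A ⊗ B ⟶ (A ⊗ B) ⊗ (A ⊗ B) :=
  (dA ⊗ₘ dB) ≫
    (α_ A A (B ⊗ B)).hom ≫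
    (A ◁ (α_ A B B).inv) ≫
    (A ◁ ((β_ A B).hom ▷ B)) ≫
    (A ◁ (α_ B A B).hom) ≫
    (α_ A B (A ⊗ B)).inv

section BpAux

open BraidedCategory

/-- The structural part of the braided-product comultiplication. -/
noncomputable def bpMstr (A B : C) : (A ⊗ A) ⊗ (B ⊗ B) ⟶ (A ⊗ B) ⊗ (A ⊗ B) :=
  (α_ A A (B ⊗ B)).hom ≫ (A ◁ (α_ A B B).inv) ≫ (A ◁ ((β_ A B).hom ▷ B)) ≫
    (A ◁ (α_ B A B).hom) ≫ (α_ A B (A ⊗ B)).inv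

/-- The same with the inverse crossing in the middle. -/
noncomputable def bpNstr (A B : C) : (A ⊗ A) ⊗ (B ⊗ B) ⟶ (A ⊗ B) ⊗ (A ⊗ B) :=
  (α_ A A (B ⊗ B)).hom ≫ (A ◁ (α_ A B B).inv) ≫ (A ◁ ((β_ B A).inv ▷ B)) ≫
    (A ◁ (α_ B A B).hom) ≫ (α_ A B (A ⊗ B)).inv

/-- Double braiding of the first tensor factor with the `A`-part of the second. -/
noncomputable def bpGam (A B : C) : (A ⊗ B) ⊗ (A ⊗ B) ⟶ (A ⊗ B) ⊗ (A ⊗ B) :=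
  (α_ (A ⊗ B) A B).inv ≫ (((β_ (A ⊗ B) A).hom ≫ (β_ A (A ⊗ B)).hom) ▷ B) ≫
    (α_ (A ⊗ B) A B).hom

/-- A morphism into the unit object can be slid around a braiding. -/
lemma bp_slide_hom {Z W : C} (f : Z ⟶ 𝟙_ C) :
    (f ▷ W) ≫ (λ_ W).hom = (β_ Z W).hom ≫ (W ◁ f) ≫ (ρ_ W).hom := by
  rw [← braiding_naturality_left_assoc, braiding_rightUnitor]

/-- The double braiding with a morphism into the unit object is invisible. -/
lemma bp_kill_double {Z W : C} (f : Z ⟶ 𝟙_ C) :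
    (β_ Z W).hom ≫ (β_ W Z).hom ≫ (f ▷ W) = f ▷ W := by
  rw [← braiding_naturality_right, ← braiding_naturality_left_assoc]
  simp

lemma bpGam_kill {A B : C} (q : A ⊗ B ⟶ 𝟙_ C) :
    bpGam A B ≫ (q ▷ (A ⊗ B)) = q ▷ (A ⊗ B) := by
  rw [bpGam, whiskerRight_tensor]
  simp only [Category.assoc, Iso.hom_inv_id_assoc]
  rw [cancel_epi, ← comp_whiskerRight_assoc, Category.assoc, bp_kill_double]

lemma bpE2 (A B : C) :
    bpNstr A B ≫ (β_ (A ⊗ B) (A ⊗ B)).hom = ((β_ A A).hom ⊗ₘ (β_ B B).hom) ≫ bpMstr A B := by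
  calc bpNstr A B ≫ (β_ (A ⊗ B) (A ⊗ B)).hom
      = (α_ A A (B ⊗ B)).hom ≫ (A ◁ (α_ A B B).inv) ≫
          (A ◁ ((β_ B A).inv ▷ B)) ≫ (A ◁ ((β_ B A).hom ▷ B)) ≫
          (A ◁ (α_ A B B).hom) ≫ (A ◁ (A ◁ (β_ B B).hom)) ≫
          (α_ A A (B ⊗ B)).inv ≫ (α_ (A ⊗ A) B B).inv ≫
          (((β_ A A).hom ▷ B) ▷ B) ≫ ((α_ A A B).hom ▷ B) ≫
          ((A ◁ (β_ A B).hom) ▷ B) ≫ ((α_ A B A).inv ▷ B) ≫ (α_ (A ⊗ B) A B).hom := by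
        rw [braiding_tensor_left_hom A B (A ⊗ B), braiding_tensor_right_hom B A B,
          braiding_tensor_right_hom A A B, bpNstr]
        monoidal
    _ = (α_ A A (B ⊗ B)).hom ≫ (A ◁ (α_ A B B).inv) ≫
          (A ◁ (α_ A B B).hom) ≫ (A ◁ (A ◁ (β_ B B).hom)) ≫
          (α_ A A (B ⊗ B)).inv ≫ (α_ (A ⊗ A) B B).inv ≫
          (((β_ A A).hom ▷ B) ▷ B) ≫ ((α_ A A B).hom ▷ B) ≫
          ((A ◁ (β_ A B).hom) ▷ B) ≫ ((α_ A B A).inv ▷ B) ≫ (α_ (A ⊗ B) A B).hom := by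
        slice_lhs 3 4 =>
          rw [← MonoidalCategory.whiskerLeft_comp, ← comp_whiskerRight, Iso.inv_hom_id,
            id_whiskerRight, MonoidalCategory.whiskerLeft_id]
        simp only [Category.id_comp, Category.assoc]
    _ = ((β_ A A).hom ⊗ₘ (β_ B B).hom) ≫ bpMstr A B := by
        rw [tensorHom_def', bpMstr]
        monoidal

lemma bpE3 (A B : C) :
    bpNstr A B ≫ bpGam A B =
      ((((β_ A A).hom ≫ (β_ A A).hom) : A ⊗ A ⟶ A ⊗ A) ⊗ₘ 𝟙 (B ⊗ B)) ≫ bpMstr A B := by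
  calc bpNstr A B ≫ bpGam A B
      = (α_ A A (B ⊗ B)).hom ≫ (A ◁ (α_ A B B).inv) ≫
          (A ◁ ((β_ B A).inv ▷ B)) ≫ (A ◁ ((β_ B A).hom ▷ B)) ≫
          (α_ A (A ⊗ B) B).inv ≫ ((α_ A A B).inv ▷ B) ≫
          (((β_ A A).hom ▷ B) ▷ B) ≫ (((β_ A A).hom ▷ B) ▷ B) ≫
          ((α_ A A B).hom ▷ B) ≫ ((A ◁ (β_ A B).hom) ▷ B) ≫
          ((α_ A B A).inv ▷ B) ≫ (α_ (A ⊗ B) A B).hom := by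
        rw [bpGam, braiding_tensor_left_hom A B A, braiding_tensor_right_hom A A B, bpNstr]
        monoidal
    _ = (α_ A A (B ⊗ B)).hom ≫ (A ◁ (α_ A B B).inv) ≫
          (α_ A (A ⊗ B) B).inv ≫ ((α_ A A B).inv ▷ B) ≫
          (((β_ A A).hom ▷ B) ▷ B) ≫ (((β_ A A).hom ▷ B) ▷ B) ≫
          ((α_ A A B).hom ▷ B) ≫ ((A ◁ (β_ A B).hom) ▷ B) ≫
          ((α_ A B A).inv ▷ B) ≫ (α_ (A ⊗ B) A B).hom := by
        slice_lhs 3 4 =>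
          rw [← MonoidalCategory.whiskerLeft_comp, ← comp_whiskerRight, Iso.inv_hom_id,
            id_whiskerRight, MonoidalCategory.whiskerLeft_id]
        simp only [Category.id_comp, Category.assoc]
    _ = ((((β_ A A).hom ≫ (β_ A A).hom) : A ⊗ A ⟶ A ⊗ A) ⊗ₘ 𝟙 (B ⊗ B)) ≫ bpMstr A B := by
        rw [tensorHom_id, comp_whiskerRight, bpMstr]
        monoidal

end BpAux

/-- For cocommutative comonoid objects `(A, δ_A, ε_A)` and `(B, δ_B, ε_B)` in a braided
monoidal category, and the braided-product comultiplication `δ_×` on `A ⊗ B`, every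
morphism `q : A ⊗ B ⟶ 𝟙` satisfies
`δ_× ≫ (q ⊗ id) ≫ λ = δ_× ≫ (id ⊗ q) ≫ ρ`.  This is the condition `q x = θ(q) x`
characterizing central elements: for the braided product of two commutative Q-systems
(two local extensions) the entire relative commutant coincides with the centre. -/
theorem relativeCommutant_eq_centre_of_cocommutative
    {A B : C} (dA : A ⟶ A ⊗ A) (eA : A ⟶ 𝟙_ C) (dB : B ⟶ B ⊗ B) (eB : B ⟶ 𝟙_ C)
    (coassocA : dA ≫ (dA ⊗ₘ 𝟙 A) ≫ (α_ A A A).hom = dA ≫ (𝟙 A ⊗ₘ dA))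
    (counitA_left : dA ≫ (eA ⊗ₘ 𝟙 A) = (λ_ A).inv)
    (counitA_right : dA ≫ (𝟙 A ⊗ₘ eA) = (ρ_ A).inv)
    (cocommA : dA ≫ (β_ A A).hom = dA)
    (coassocB : dB ≫ (dB ⊗ₘ 𝟙 B) ≫ (α_ B B B).hom = dB ≫ (𝟙 B ⊗ₘ dB))
    (counitB_left : dB ≫ (eB ⊗ₘ 𝟙 B) = (λ_ B).inv)
    (counitB_right : dB ≫ (𝟙 B ⊗ₘ eB) = (ρ_ B).inv)
    (cocommB : dB ≫ (β_ B B).hom = dB)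
    (q : A ⊗ B ⟶ 𝟙_ C) :
    bpComul dA dB ≫ (q ⊗ₘ 𝟙 (A ⊗ B)) ≫ (λ_ (A ⊗ B)).hom =
      bpComul dA dB ≫ (𝟙 (A ⊗ B) ⊗ₘ q) ≫ (ρ_ (A ⊗ B)).hom := by
  have bp : bpComul dA dB = (dA ⊗ₘ dB) ≫ bpMstr A B := by
    rw [bpComul, bpMstr]
  have hA2 : (dA ⊗ₘ dB) ≫ ((((β_ A A).hom ≫ (β_ A A).hom) : A ⊗ A ⟶ A ⊗ A) ⊗ₘ 𝟙 (B ⊗ B))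
      = dA ⊗ₘ dB := by
    rw [tensorHom_comp_tensorHom, Category.comp_id, ← Category.assoc, cocommA, cocommA]
  have hAB : (dA ⊗ₘ dB) ≫ ((β_ A A).hom ⊗ₘ (β_ B B).hom) = dA ⊗ₘ dB := by
    rw [tensorHom_comp_tensorHom, cocommA, cocommB]
  rw [tensorHom_id, id_tensorHom, bp]
  simp only [Category.assoc]
  conv_lhs => rw [← hA2]
  simp only [Category.assoc]
  rw [← reassoc_of% (bpE3 A B)]
  rw [reassoc_of% (bpGam_kill q)]
  rw [bp_slide_hom q]
  rw [reassoc_of% (bpE2 A B)]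
  rw [reassoc_of% hAB]
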